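/- Let G be a gap-free, diamond-free finite simple graph with clique number exactly 3 and no isolated vertices, let K be a dominating triangle of G in which every outside vertex has exactly one neighbor, and let x be a vertex of K. Then the induced subgraph G − st(x) obtained by deleting x and all its neighbors is bipartite. -/

import Mathlib

open SimpleGraph

/-- A graph is gap-free if no two disjoint edges induce a subgraph with exactly those two edges. -/
def IsGapFree {V : Type*} (G : SimpleGraph V) : Prop :=
  ¬ ∃ a b c d : V, a ≠ b ∧ a ≠ c ∧ a ≠ d ∧ b ≠ c ∧ b ≠ d ∧ c ≠ d ∧
    G.Adj a b ∧ G.Adj c d ∧ ¬G.Adj a c ∧ ¬G.Adj a d ∧ ¬G.Adj b c ∧ ¬G.Adj b d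

/-- A graph is diamond-free if it has no induced `K₄` minus an edge
(vertices `a b c d`, edges `ab, ac, bc, ad, cd`, non-edge `bd`). -/
def IsDiamondFree {V : Type*} (G : SimpleGraph V) : Prop :=
  ¬ ∃ a b c d : V, a ≠ b ∧ a ≠ c ∧ a ≠ d ∧ b ≠ c ∧ b ≠ d ∧ c ≠ d ∧
    G.Adj a b ∧ G.Adj a c ∧ G.Adj b c ∧ G.Adj a d ∧ G.Adj c d ∧ ¬G.Adj b d

/-- The clique number of a graph. -/
noncomputable def cliqueNum' {V : Type*} (G : SimpleGraph V) : ℕ :=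
  sSup {n | ∃ s : Finset V, G.IsNClique n s}

/-- The cycle graph on `Fin n` (for `n ≥ 3`). -/
def cycG (n : ℕ) : SimpleGraph (Fin n) :=
  SimpleGraph.fromRel (fun i j => (j : ℕ) = ((i : ℕ) + 1) % n)

/-- `G` has an induced cycle on `n` vertices. -/
def HasInducedCycle {V : Type*} (G : SimpleGraph V) (n : ℕ) : Prop :=
  ∃ f : Fin n → V, Function.Injective f ∧ ∀ i j, G.Adj (f i) (f j) ↔ (cycG n).Adj i j

/-- A graph is chordal if it has no induced cycle on `n ≥ 4` vertices. -/
def IsChordal {V : Type*} (G : SimpleGraph V) : Prop :=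
  ∀ n, 4 ≤ n → ¬ HasInducedCycle G n

/-- The graph obtained from `G` by multiplying the vertex `v` by the independent set `U`:
`v` is replaced by the vertices of `U`, each adjacent exactly to the neighbors of `v`,
with `U` independent and all other adjacencies as in `G`. -/
def VertexMul {V : Type*} (U : Type*) (G : SimpleGraph V) (v : V) :
    SimpleGraph ({x : V // x ≠ v} ⊕ U) :=
  SimpleGraph.fromRel (fun a b =>
    match a, b with
    | Sum.inl x, Sum.inl y => G.Adj x.1 y.1
    | Sum.inl x, Sum.inr _ => G.Adj x.1 v
    | Sum.inr _, Sum.inl y => G.Adj y.1 v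
    | Sum.inr _, Sum.inr _ => False)

/-- If G is (gap, diamond)-free with clique number exactly 3 and no isolated vertices,
K a dominating triangle whose outside vertices have exactly one neighbor in K, and x ∈ K,
then the induced subgraph on the complement of st(x) is bipartite. -/
theorem stmt_7 {V : Type*} [Fintype V] (G : SimpleGraph V)
    (hgap : IsGapFree G) (hdia : IsDiamondFree G) (hw : cliqueNum' G = 3)
    (hiso : ∀ v : V, ∃ w, G.Adj v w)
    (K : Finset V) (hK : G.IsNClique 3 K)
    (hdom : ∀ v : V, v ∉ K → ∃! u, u ∈ K ∧ G.Adj v u)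
    (x : V) (hx : x ∈ K) :
    (G.induce {w : V | w ≠ x ∧ ¬ G.Adj x w}).Colorable 2 := by
  classical
  -- Extract the other two vertices of the triangle K
  have hcard : (K.erase x).card = 2 := by
    rw [Finset.card_erase_of_mem hx, hK.card_eq]
  obtain ⟨y, z, hyz, hKe⟩ := Finset.card_eq_two.mp hcard
  have hyK : y ∈ K := Finset.mem_of_mem_erase (hKe ▸ (by simp : y ∈ ({y, z} : Finset V)))
  have hzK : z ∈ K := Finset.mem_of_mem_erase (hKe ▸ (by simp : z ∈ ({y, z} : Finset V)))
  have hxy : x ≠ y := by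
    intro h; have : y ∈ K.erase x := hKe ▸ (by simp : y ∈ ({y, z} : Finset V))
    exact (Finset.ne_of_mem_erase this) h.symm
  have hxz : x ≠ z := by
    intro h; have : z ∈ K.erase x := hKe ▸ (by simp : z ∈ ({y, z} : Finset V))
    exact (Finset.ne_of_mem_erase this) h.symm
  have hKmem : ∀ u, u ∈ K → u = x ∨ u = y ∨ u = z := by
    intro u hu
    by_cases h : u = x
    · exact Or.inl h
    · have : u ∈ K.erase x := Finset.mem_erase.mpr ⟨h, hu⟩
      rw [hKe] at this
      simpa using Or.inr (by simpa using this)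
  have adjxy : G.Adj x y := hK.isClique hx hyK hxy
  have adjxz : G.Adj x z := hK.isClique hx hzK hxz
  -- vertices of the set
  set S : Set V := {w : V | w ≠ x ∧ ¬ G.Adj x w} with hS
  have key : ∀ w ∈ S, (G.Adj w y ∧ ¬ G.Adj w z) ∨ (G.Adj w z ∧ ¬ G.Adj w y) := by
    intro w hw
    have hwx : w ≠ x := hw.1
    have hwnadj : ¬ G.Adj x w := hw.2
    have hwK : w ∉ K := by
      intro h
      rcases hKmem w h with h1 | h1 | h1
      · exact hwx h1
      · exact hwnadj (h1 ▸ adjxy)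
      · exact hwnadj (h1 ▸ adjxz)
    obtain ⟨u, ⟨huK, hadj⟩, huniq⟩ := hdom w hwK
    have hux : u ≠ x := fun h => hwnadj ((h ▸ hadj).symm)
    rcases hKmem u huK with h1 | h1 | h1
    · exact absurd h1 hux
    · left
      refine ⟨h1 ▸ hadj, fun hz' => ?_⟩
      have := huniq z ⟨hzK, hz'⟩
      have := huniq y ⟨hyK, h1 ▸ hadj⟩
      exact hyz (by grind)
    · right
      refine ⟨h1 ▸ hadj, fun hy' => ?_⟩
      have := huniq y ⟨hyK, hy'⟩
      have := huniq z ⟨hzK, h1 ▸ hadj⟩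
      exact hyz (by grind)
  refine ⟨SimpleGraph.Coloring.mk (fun w => if G.Adj w.1 y then 0 else 1) ?_⟩
  rintro ⟨a, ha⟩ ⟨b, hb⟩ hab
  have hab' : G.Adj a b := hab
  intro hcol
  have haz : a ≠ z := fun h => ha.2 (h ▸ adjxz)
  have hbz : b ≠ z := fun h => hb.2 (h ▸ adjxz)
  have hay : a ≠ y := fun h => ha.2 (h ▸ adjxy)
  have hby : b ≠ y := fun h => hb.2 (h ▸ adjxy)
  simp only at hcol
  by_cases hA : G.Adj a y
  · -- both adjacent to y; then a,b,x,z form a gap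
    have hB : G.Adj b y := by
      by_contra hB
      simp [hA, hB] at hcol
    have hAz : ¬ G.Adj a z := ((key a ha).resolve_right (fun h => h.2 hA)).2
    have hBz : ¬ G.Adj b z := ((key b hb).resolve_right (fun h => h.2 hB)).2
    exact hgap ⟨a, b, x, z, hab'.ne, ha.1, haz, hb.1, hbz, hxz,
      hab', adjxz, fun h => ha.2 h.symm, hAz, fun h => hb.2 h.symm, hBz⟩
  · -- both adjacent to z; then a,b,x,y form a gap
    have hB : ¬ G.Adj b y := by
      by_contra hB
      simp [hA, hB] at hcol
    have hAz : G.Adj a z := ((key a ha).resolve_left (fun h => hA h.1)).1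
    have hBz : G.Adj b z := ((key b hb).resolve_left (fun h => hB h.1)).1
    exact hgap ⟨a, b, x, y, hab'.ne, ha.1, hay, hb.1, hby, hxy,
      hab', adjxy, fun h => ha.2 h.symm, hA, fun h => hb.2 h.symm, hB⟩
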